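/- For any multi-permutation ρ ∈ S(M), each of the two sets C^e = {γ ∈ S(M) : d_K(ρ, γ) ≡ 0 (mod 2)} and C^o = {γ ∈ S(M) : d_K(ρ, γ) ≡ 1 (mod 2)} has minimum Kendall τ-distance at least 2; that is, any two distinct multi-permutations that lie at distances from ρ of the same parity are at Kendall τ-distance at least 2 from each other. -/
import Mathlib


/-- `AdjTrans σ π` : the sequence `π` is obtained from the sequence `σ` by exchanging
two distinct adjacent elements (an adjacent transposition). -/
def AdjTrans (σ π : List ℤ) : Prop :=
  ∃ (l₁ l₂ : List ℤ) (a b : ℤ), a ≠ b ∧ σ = l₁ ++ a :: b :: l₂ ∧ π = l₁ ++ b :: a :: l₂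

/-- `StepsTo n σ π` : `π` can be obtained from `σ` by a sequence of `n` adjacent
transpositions. -/
def StepsTo : ℕ → List ℤ → List ℤ → Prop
  | 0 => fun σ π => σ = π
  | n + 1 => fun σ π => ∃ τ, AdjTrans σ τ ∧ StepsTo n τ π

/-- The Kendall τ-distance between two sequences: the minimum number of adjacent
transpositions needed to transform one into the other. -/
noncomputable def dK (σ π : List ℤ) : ℕ := sInf {n | StepsTo n σ π}

/-- The list `[a, a+1, ..., a+len-1]` of integers. -/
def rangeList (a len : ℕ) : List ℤ := (List.range' a len).map (fun x => (x : ℤ))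

/-- The substitution map `T_θ`: the `r`-th occurrence (from the left, `0`-indexed) of a
rank `a` in `σ` is replaced by the `r`-th entry of the list `θ a`. -/
def Tmap (θ : ℤ → List ℤ) (σ : List ℤ) : List ℤ :=
  (List.range σ.length).map (fun j =>
    (θ (σ.getD j 0)).getD ((σ.take j).count (σ.getD j 0)) 0)

/-- `psiEntry σ a s` : the number of positions in `σ` strictly to the right of the `s`-th
occurrence (`0`-indexed) of `a` in `σ` that hold an element smaller than `a`. -/
def psiEntry (σ : List ℤ) (a : ℤ) (s : ℕ) : ℕ :=
  (σ.drop (((σ.indexesOf a).getD s σ.length) + 1)).countP (fun x => decide (x < a))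

/-- The Manhattan distance between two vectors of naturals (presented as lists). -/
def manhattanL (x y : List ℕ) : ℕ :=
  ∑ i ∈ Finset.range (max x.length y.length), ((x.getD i 0 : ℤ) - (y.getD i 0 : ℤ)).natAbs

/-- The Lee distance over `Z_q` between two vectors with entries in `{0, …, q-1}`
(presented as lists). -/
def leeDistL (q : ℕ) (x y : List ℕ) : ℕ :=
  ∑ i ∈ Finset.range (max x.length y.length),
    min (((x.getD i 0 : ℤ) - (y.getD i 0 : ℤ)).natAbs)
      (q - ((x.getD i 0 : ℤ) - (y.getD i 0 : ℤ)).natAbs)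

/-- The Lee distance between two vectors over `ZMod q`. -/
def zmodLee {q N : ℕ} (x y : Fin N → ZMod q) : ℕ :=
  ∑ i, min (x i - y i).val (y i - x i).val

/-- `permList k σ` : `σ` is (an ordering representing) a permutation of `{1, …, k}`. -/
def permList (k : ℕ) (σ : List ℤ) : Prop :=
  (↑σ : Multiset ℤ) = (↑(rangeList 1 k) : Multiset ℤ)

/-- The multiset `M_{k,r} = {0^k, k+1, …, k+r}`. -/
def Mkr (k r : ℕ) : Multiset ℤ :=
  Multiset.replicate k (0 : ℤ) + (↑(rangeList (k + 1) r) : Multiset ℤ)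

/-- `α_{↓k}` : delete from `α` all elements larger than `k`. -/
def restrictTo (k : ℕ) (α : List ℤ) : List ℤ :=
  α.filter (fun x => decide (x ≤ (k : ℤ)))

/-- `α_{k↦0}` : replace in `α` every element of `{1, …, k}` by `0`. -/
def mapToZero (k : ℕ) (α : List ℤ) : List ℤ :=
  α.map (fun x => if 1 ≤ x ∧ x ≤ (k : ℤ) then 0 else x)

/-- `star σ ρ = σ ∗ ρ` : replace the zeros of `ρ`, from left to right, by the elements
of `σ` in order. -/
def starP : List ℤ → List ℤ → List ℤ
  | _, [] => []
  | σ, x :: ρ' => if x = 0 then σ.headD 0 :: starP σ.tail ρ' else x :: starP σ ρ'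

/-- Inversion count of a list. -/
def invL : List ℤ → ℕ
  | [] => 0
  | a :: l => l.countP (fun x => decide (x < a)) + invL l

lemma invL_append (l₁ l₂ : List ℤ) :
    invL (l₁ ++ l₂) =
      invL l₁ + (l₁.map (fun a => l₂.countP (fun x => decide (x < a)))).sum + invL l₂ := by
  induction l₁ with
  | nil => simp [invL]
  | cons a t ih => simp [invL, ih, List.countP_append]; ring

lemma adjTrans_parity {σ π : List ℤ} (h : AdjTrans σ π) :
    (invL σ + invL π) % 2 = 1 := by
  obtain ⟨l₁, l₂, a, b, hab, hσ, hπ⟩ := h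
  subst hσ hπ
  rw [invL_append, invL_append]
  have hmap : (l₁.map (fun c => (a :: b :: l₂).countP (fun x => decide (x < c)))).sum
      = (l₁.map (fun c => (b :: a :: l₂).countP (fun x => decide (x < c)))).sum := by
    congr 1
    apply List.map_congr_left
    intro c _
    simp [List.countP_cons]
    omega
  rw [hmap]
  simp only [invL, List.countP_cons]
  rcases lt_or_gt_of_ne hab with h | h
  · simp [h, not_lt.2 h.le]
    omega
  · simp [h, not_lt.2 h.le]
    omega

lemma stepsTo_parity {n : ℕ} {σ π : List ℤ} (h : StepsTo n σ π) :
    (n + invL σ + invL π) % 2 = 0 := by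
  induction n generalizing σ with
  | zero => cases h; omega
  | succ n ih =>
    obtain ⟨τ, h1, h2⟩ := h
    have := ih h2
    have := adjTrans_parity h1
    omega

lemma stepsTo_trans {m n : ℕ} {σ τ π : List ℤ} (h1 : StepsTo m σ τ) (h2 : StepsTo n τ π) :
    StepsTo (m + n) σ π := by
  induction m generalizing σ with
  | zero => cases h1; simpa using h2
  | succ m ih =>
    obtain ⟨τ', ha, hs⟩ := h1
    rw [Nat.succ_add]
    exact ⟨τ', ha, ih hs⟩

lemma adjTrans_symm {σ π : List ℤ} (h : AdjTrans σ π) : AdjTrans π σ := by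
  obtain ⟨l₁, l₂, a, b, hab, hσ, hπ⟩ := h
  exact ⟨l₁, l₂, b, a, hab.symm, hπ, hσ⟩

lemma stepsTo_snoc {n : ℕ} {σ τ π : List ℤ} (h1 : StepsTo n σ τ) (h2 : AdjTrans τ π) :
    StepsTo (n + 1) σ π := by
  induction n generalizing σ with
  | zero => cases h1; exact ⟨π, h2, rfl⟩
  | succ n ih =>
    obtain ⟨τ', ha, hs⟩ := h1
    exact ⟨τ', ha, ih hs⟩

lemma stepsTo_symm {n : ℕ} {σ π : List ℤ} (h : StepsTo n σ π) : StepsTo n π σ := by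
  induction n generalizing σ with
  | zero => cases h; rfl
  | succ n ih =>
    obtain ⟨τ, ha, hs⟩ := h
    exact stepsTo_snoc (ih hs) (adjTrans_symm ha)

lemma stepsTo_cons {n : ℕ} (c : ℤ) {σ π : List ℤ} (h : StepsTo n σ π) :
    StepsTo n (c :: σ) (c :: π) := by
  induction n generalizing σ with
  | zero => cases h; rfl
  | succ n ih =>
    obtain ⟨τ, ⟨l₁, l₂, a, b, hab, h1, h2⟩, hs⟩ := h
    exact ⟨c :: τ, ⟨c :: l₁, l₂, a, b, hab, by simp [h1], by simp [h2]⟩, ih hs⟩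

lemma stepsTo_bubble (a : ℤ) (u v : List ℤ) (hu : a ∉ u) :
    StepsTo u.length (a :: (u ++ v)) (u ++ a :: v) := by
  induction u with
  | nil => rfl
  | cons b u' ih =>
    have hab : a ≠ b := fun h => hu (by simp [h])
    refine ⟨b :: a :: (u' ++ v), ⟨[], u' ++ v, a, b, hab, rfl, rfl⟩, ?_⟩
    exact stepsTo_cons b (ih (fun h => hu (List.mem_cons_of_mem _ h)))

lemma exists_split {a : ℤ} {l : List ℤ} (h : a ∈ l) :
    ∃ u v, l = u ++ a :: v ∧ a ∉ u := by
  induction l with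
  | nil => simp at h
  | cons b t ih =>
    by_cases hab : a = b
    · exact ⟨[], t, by simp [hab], by simp⟩
    · obtain ⟨u, v, h1, h2⟩ := ih (by rcases List.mem_cons.1 h with h | h; exact absurd h hab; exact h)
      exact ⟨b :: u, v, by simp [h1], by simp [h2, Ne.symm, hab]⟩

lemma perm_stepsTo {l₁ l₂ : List ℤ} (h : l₁.Perm l₂) : ∃ n, StepsTo n l₁ l₂ := by
  induction l₁ generalizing l₂ with
  | nil => exact ⟨0, (h.nil_eq).symm ▸ rfl⟩
  | cons a t ih =>
    have ha : a ∈ l₂ := h.mem_iff.1 (by simp)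
    obtain ⟨u, v, rfl, hu⟩ := exists_split ha
    have ht : t.Perm (u ++ v) := (h.trans List.perm_middle).cons_inv
    obtain ⟨m, hm⟩ := ih ht
    exact ⟨m + u.length, stepsTo_trans (stepsTo_cons a hm) (stepsTo_bubble a u v hu)⟩


/-- For any `ρ ∈ S(M)`, each of the parity classes
`C^e = {γ ∈ S(M) : d_K(ρ, γ) even}` and `C^o = {γ ∈ S(M) : d_K(ρ, γ) odd}` has minimum
Kendall τ-distance at least 2: any two distinct multi-permutations of `S(M)` lying at
distances of the same parity from `ρ` are at Kendall τ-distance at least `2` from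
each other. -/
theorem stmt3 (M : Multiset ℤ) (ρ γ₁ γ₂ : List ℤ)
    (hρ : (↑ρ : Multiset ℤ) = M) (hγ₁ : (↑γ₁ : Multiset ℤ) = M) (hγ₂ : (↑γ₂ : Multiset ℤ) = M)
    (hne : γ₁ ≠ γ₂) (hpar : dK ρ γ₁ % 2 = dK ρ γ₂ % 2) :
    2 ≤ dK γ₁ γ₂ := by
  have p1 : ρ.Perm γ₁ := Multiset.coe_eq_coe.1 (by rw [hρ, hγ₁])
  have p2 : ρ.Perm γ₂ := Multiset.coe_eq_coe.1 (by rw [hρ, hγ₂])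
  have p12 : γ₁.Perm γ₂ := Multiset.coe_eq_coe.1 (by rw [hγ₁, hγ₂])
  have h1 : StepsTo (dK ρ γ₁) ρ γ₁ := Nat.sInf_mem (perm_stepsTo p1)
  have h2 : StepsTo (dK ρ γ₂) ρ γ₂ := Nat.sInf_mem (perm_stepsTo p2)
  have h12 : StepsTo (dK γ₁ γ₂) γ₁ γ₂ := Nat.sInf_mem (perm_stepsTo p12)
  have q1 := stepsTo_parity h1
  have q2 := stepsTo_parity h2
  by_contra hlt
  push_neg at hlt
  interval_cases hd : (dK γ₁ γ₂)
  · exact hne h12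
  · obtain ⟨τ, ha, hs⟩ := h12
    cases hs
    have := adjTrans_parity ha
    omega
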